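/- arXiv:2309.02372 — 2 statements merged into one kernel-verified Lean document; each statement's English description precedes it below -/
import Mathlib

section
/- Let A = Z/4Z and let X be the complex with X_i = Z/4Z in every degree and all differentials given by multiplication by 2. Then X is acyclic, but the tensor product complex X ⊗_A X is not acyclic. -/
open CategoryTheory MonoidalCategory
open Limits

instance curriedTensorAdditive : (curriedTensor (ModuleCat.{0} (ZMod 4))).Additive where
  map_add {X Y f g} := by
    ext Z : 2
    simp [MonoidalPreadditive.add_whiskerRight]

/-- The cochain complex `⋯ → ℤ/4 → ℤ/4 → ℤ/4 → ⋯` (indexed by `ℤ`) over the ring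
`ℤ/4`, in which every differential is multiplication by `2`. -/
noncomputable def mulTwoComplex :
    HomologicalComplex (ModuleCat.{0} (ZMod 4)) (ComplexShape.up ℤ) where
  X _ := ModuleCat.of (ZMod 4) (ZMod 4)
  d i j := if i + 1 = j then ModuleCat.ofHom (LinearMap.lsmul (ZMod 4) (ZMod 4) 2) else 0
  shape i j h := by
    simp only [ComplexShape.up_Rel] at h
    try dsimp only
    rw [if_neg h]
  d_comp_d' i j k _ _ := by
    try dsimp only
    split_ifs
    · apply ModuleCat.hom_ext
      apply LinearMap.ext
      intro x
      show (2 : ZMod 4) • ((2 : ZMod 4) • x) = 0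
      rw [smul_smul, show (2 : ZMod 4) * 2 = 0 by decide, zero_smul]
    all_goals simp

lemma mulTwoComplex_d (j k : ℤ) (h : j + 1 = k) :
    mulTwoComplex.d j k = ModuleCat.ofHom (LinearMap.lsmul (ZMod 4) (ZMod 4) 2) := by
  subst h; simp [mulTwoComplex]

/-- sign function -/
def sgn (p : ℤ) : ZMod 4 := if p % 4 = 0 ∨ p % 4 = 3 then 1 else -1

lemma sgn_rec (p : ℤ) :
    2 * sgn (p + 1) + 2 * ((p.negOnePow : ℤ) : ZMod 4) * sgn p = 0 := by
  have h4 : p % 4 = 0 ∨ p % 4 = 1 ∨ p % 4 = 2 ∨ p % 4 = 3 := by omega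
  rcases h4 with h | h | h | h
  · rw [Int.negOnePow_even _ (Int.even_iff.mpr (by omega))]
    simp [sgn, h, show (p+1) % 4 = 1 by omega]
  · rw [Int.negOnePow_odd _ (Int.odd_iff.mpr (by omega))]
    simp [sgn, h, show (p+1) % 4 = 2 by omega]
  · rw [Int.negOnePow_even _ (Int.even_iff.mpr (by omega))]
    simp [sgn, h, show (p+1) % 4 = 3 by omega]
  · rw [Int.negOnePow_odd _ (Int.odd_iff.mpr (by omega))]
    simp [sgn, h, show (p+1) % 4 = 0 by omega]

/-- multiplication map on a summand -/
noncomputable def mulmap (p q : ℤ) :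
    ((curriedTensor (ModuleCat.{0} (ZMod 4))).obj (mulTwoComplex.X p)).obj (mulTwoComplex.X q)
      ⟶ ModuleCat.of (ZMod 4) (ZMod 4) :=
  ModuleCat.ofHom (LinearMap.mul' (ZMod 4) (ZMod 4))

noncomputable def phi :
    (HomologicalComplex.tensorObj mulTwoComplex mulTwoComplex).X 0 ⟶
      ModuleCat.of (ZMod 4) (ZMod 4) :=
  HomologicalComplex.mapBifunctorDesc (fun p q _ => sgn p • mulmap p q)


open HomologicalComplex in
lemma d_phi :
    (HomologicalComplex.tensorObj mulTwoComplex mulTwoComplex).d (-1) 0 ≫ phi = 0 := by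
  apply HomologicalComplex.mapBifunctor.hom_ext
  intro p q h
  have hpq : p + q = -1 := h
  rw [comp_zero, ← Category.assoc]
  rw [show HomologicalComplex.ιMapBifunctor mulTwoComplex mulTwoComplex (curriedTensor _) (ComplexShape.up ℤ)
      p q (-1) h ≫ (HomologicalComplex.tensorObj mulTwoComplex mulTwoComplex).d (-1) 0 =
      HomologicalComplex.mapBifunctor.d₁ mulTwoComplex mulTwoComplex (curriedTensor _) (ComplexShape.up ℤ) p q 0 +
      HomologicalComplex.mapBifunctor.d₂ mulTwoComplex mulTwoComplex (curriedTensor _) (ComplexShape.up ℤ) p q 0 by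
    rw [HomologicalComplex.mapBifunctor.d_eq, Preadditive.comp_add, HomologicalComplex.mapBifunctor.ι_D₁, HomologicalComplex.mapBifunctor.ι_D₂]]
  rw [HomologicalComplex.mapBifunctor.d₁_eq _ _ _ _ (show (ComplexShape.up ℤ).Rel p (p+1) from rfl) q 0
      (show (p+1)+q = 0 by omega),
    HomologicalComplex.mapBifunctor.d₂_eq _ _ _ _ p (show (ComplexShape.up ℤ).Rel q (q+1) from rfl) 0
      (show p+(q+1) = 0 by omega)]
  rw [mulTwoComplex_d p (p+1) rfl, mulTwoComplex_d q (q+1) rfl]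
  simp only [ComplexShape.ε₁_def, ComplexShape.ε₂_def,
    ComplexShape.ε_up_ℤ, one_smul, Preadditive.add_comp, Units.smul_def, Preadditive.zsmul_comp, Category.assoc,
    curriedTensor_map_app, curriedTensor_obj_map, phi, HomologicalComplex.ι_mapBifunctorDesc]
  apply ModuleCat.hom_ext
  apply TensorProduct.ext'
  intro x y
  change ZMod 4 at x y
  simp only [LinearMap.add_apply, LinearMap.smul_apply, 
    Function.comp_apply, ModuleCat.MonoidalCategory.whiskerRight_apply, ModuleCat.MonoidalCategory.whiskerLeft_apply, id_eq,
    mulmap, ModuleCat.ofHom, LinearMap.mul'_apply, LinearMap.lsmul_apply, LinearMap.zero_apply,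
    smul_eq_mul, zsmul_eq_mul, ModuleCat.hom_add, ModuleCat.hom_smul, ModuleCat.hom_zsmul, ModuleCat.hom_comp, ModuleCat.hom_zero, ModuleCat.hom_ofHom, LinearMap.comp_apply]
  show sgn (p + 1) * ((2:ZMod 4) * x * y) + ((p.negOnePow : ℤ) : ZMod 4) * (sgn p * (x * ((2:ZMod 4) * y))) = 0
  linear_combination (x * y) * sgn_rec p

lemma two_id : ModuleCat.ofHom (LinearMap.lsmul (ZMod 4) (ZMod 4) 2)
    = (2 : ZMod 4) • 𝟙 (ModuleCat.of (ZMod 4) (ZMod 4)) := by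
  ext x; rfl

open HomologicalComplex in
lemma z_cocycle :
    (ModuleCat.ofHom (LinearMap.lsmul (ZMod 4) (ZMod 4) 2) ▷ mulTwoComplex.X (0:ℤ)) ≫
      HomologicalComplex.ιMapBifunctor mulTwoComplex mulTwoComplex (curriedTensor _) (ComplexShape.up ℤ) 0 0 0
        (by decide) ≫
      (HomologicalComplex.tensorObj mulTwoComplex mulTwoComplex).d 0 1 = 0 := by
  erw [show HomologicalComplex.ιMapBifunctor mulTwoComplex mulTwoComplex (curriedTensor _) (ComplexShape.up ℤ)
      0 0 0 (by decide) ≫ (HomologicalComplex.tensorObj mulTwoComplex mulTwoComplex).d 0 1 =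
      HomologicalComplex.mapBifunctor.d₁ mulTwoComplex mulTwoComplex (curriedTensor _) (ComplexShape.up ℤ) 0 0 1 +
      HomologicalComplex.mapBifunctor.d₂ mulTwoComplex mulTwoComplex (curriedTensor _) (ComplexShape.up ℤ) 0 0 1 by
    rw [HomologicalComplex.mapBifunctor.d_eq, Preadditive.comp_add, HomologicalComplex.mapBifunctor.ι_D₁, HomologicalComplex.mapBifunctor.ι_D₂]]
  rw [HomologicalComplex.mapBifunctor.d₁_eq _ _ _ _ (show (ComplexShape.up ℤ).Rel 0 (0+1) from rfl) 0 1
      (by decide),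
    HomologicalComplex.mapBifunctor.d₂_eq _ _ _ _ 0 (show (ComplexShape.up ℤ).Rel 0 (0+1) from rfl) 1
      (by decide)]
  have e1 : (ModuleCat.ofHom (LinearMap.lsmul (ZMod 4) (ZMod 4) 2) ▷ mulTwoComplex.X (0:ℤ)) ≫
      ((curriedTensor (ModuleCat.{0} (ZMod 4))).map (mulTwoComplex.d 0 (0+1))).app (mulTwoComplex.X 0) = 0 := by
    apply ModuleCat.hom_ext; apply TensorProduct.ext'; intro x y
    rw [mulTwoComplex_d 0 (0+1) rfl]
    show ((2:ZMod 4) • ((2:ZMod 4) • (x : ZMod 4))) ⊗ₜ[ZMod 4] (y : ZMod 4) = (0 : TensorProduct (ZMod 4) (ZMod 4) (ZMod 4))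
    rw [smul_smul, show (2 : ZMod 4) * 2 = 0 by decide, zero_smul, TensorProduct.zero_tmul]
    rfl
  have e2 : (ModuleCat.ofHom (LinearMap.lsmul (ZMod 4) (ZMod 4) 2) ▷ mulTwoComplex.X (0:ℤ)) ≫
      ((curriedTensor (ModuleCat.{0} (ZMod 4))).obj (mulTwoComplex.X 0)).map (mulTwoComplex.d 0 (0+1)) = 0 := by
    apply ModuleCat.hom_ext; apply TensorProduct.ext'; intro x y
    rw [mulTwoComplex_d 0 (0+1) rfl]
    show ((2:ZMod 4) • (x : ZMod 4)) ⊗ₜ[ZMod 4] ((2:ZMod 4) • (y : ZMod 4)) = (0 : TensorProduct (ZMod 4) (ZMod 4) (ZMod 4))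
    rw [TensorProduct.smul_tmul_smul, show (2 : ZMod 4) * 2 = 0 by decide, zero_smul]
    rfl
  simp only [ComplexShape.ε₁_def, ComplexShape.ε₂_def, ComplexShape.ε_up_ℤ, Int.negOnePow_zero, one_smul,
    Preadditive.comp_add, Units.smul_def, Preadditive.comp_zsmul, ← Category.assoc]
  erw [Preadditive.comp_add, ← Category.assoc, e1, zero_comp, ← Category.assoc, e2, zero_comp, add_zero]

lemma key : ∀ x : ZMod 4, 2 * x = 0 → ∃ y : ZMod 4, 2 * y = x := by decide


/-- the complex `X = (⋯ →2 ℤ/4 →2 ℤ/4 →2 ⋯)` over `A = ℤ/4` is acyclic,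
but the total tensor product complex `X ⊗_A X` is not acyclic. -/
theorem mulTwoComplex_acyclic_tensor_not_acyclic :
    (∀ i : ℤ, mulTwoComplex.ExactAt i) ∧
      ¬ (∀ i : ℤ, (HomologicalComplex.tensorObj mulTwoComplex mulTwoComplex).ExactAt i) := by
  constructor
  · intro i
    rw [HomologicalComplex.exactAt_iff' _ (i-1) i (i+1) (by simp) (by simp),
      ShortComplex.moduleCat_exact_iff]
    dsimp
    change ∀ x : ZMod 4, (mulTwoComplex.d i (i+1)).hom x = 0 → ∃ y : ZMod 4, (mulTwoComplex.d (i-1) i).hom y = x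
    rw [mulTwoComplex_d (i-1) i (by omega), mulTwoComplex_d i (i+1) rfl]
    intro x hx
    exact key x hx
  · intro hT
    have h0 := hT 0
    rw [HomologicalComplex.exactAt_iff' _ (-1) 0 1 (by simp) (by simp),
      ShortComplex.moduleCat_exact_iff] at h0
    let w : TensorProduct (ZMod 4) (ZMod 4) (ZMod 4) := 1 ⊗ₜ 1
    let ι00 := HomologicalComplex.ιMapBifunctor mulTwoComplex mulTwoComplex
      (curriedTensor (ModuleCat.{0} (ZMod 4))) (ComplexShape.up ℤ) 0 0 0 (by decide)
    let z := ((ModuleCat.ofHom (LinearMap.lsmul (ZMod 4) (ZMod 4) 2) ▷ mulTwoComplex.X (0:ℤ)) ≫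
      ι00) w
    have hz : (HomologicalComplex.tensorObj mulTwoComplex mulTwoComplex).d 0 1 z = 0 := by
      have := congr($z_cocycle w)
      exact this
    obtain ⟨y, hy⟩ := h0 z hz
    -- phi z = 2
    have h3 : (ModuleCat.ofHom (LinearMap.lsmul (ZMod 4) (ZMod 4) 2) ▷ mulTwoComplex.X (0:ℤ)) ≫
        ι00 ≫ phi = (ModuleCat.ofHom (LinearMap.lsmul (ZMod 4) (ZMod 4) 2) ▷
          mulTwoComplex.X (0:ℤ)) ≫ (sgn 0 • mulmap 0 0) := by
      erw [show ι00 ≫ phi = sgn 0 • mulmap 0 0 from HomologicalComplex.ι_mapBifunctorDesc _ _ _ _]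
    have hphiz : phi z = (2 : ZMod 4) := by
      have h4 := congr($h3 w)
      have h5 : phi z = ((ModuleCat.ofHom (LinearMap.lsmul (ZMod 4) (ZMod 4) 2) ▷
          mulTwoComplex.X (0:ℤ)) ≫ ι00 ≫ phi) w := rfl
      rw [h5, h4]
      show sgn 0 • ((2 : ZMod 4) • (1:ZMod 4) * 1) = 2
      decide
    have hphiz0 : phi z = (0 : ZMod 4) := by
      rw [← hy]
      have := congr($d_phi y)
      exact this
    rw [hphiz0] at hphiz
    exact absurd hphiz (by decide : ¬ (0 : ZMod 4) = 2)
end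

section
/- Let A be a noetherian ring and M a finitely generated A-module admitting a finite resolution 0 → G_n → ··· → G_1 → G_0 → M → 0 by finitely generated Gorenstein projective modules. If additionally Ext^i_A(M, A) = 0 for all i > 0, then M itself is Gorenstein projective. -/
open CategoryTheory Opposite

/-- Vanishing of `Ext^i_A(M, N)` for left modules over a (possibly noncommutative)
ring `A`, computed in the abelian category of `A`-modules. -/
noncomputable def extVan (A : Type) [Ring A] (M N : Type) [AddCommGroup M] [Module A M]
    [AddCommGroup N] [Module A N] (i : ℕ) : Prop :=
  Subsingleton ((((Ext ℤ (ModuleCat.{0} A) i).obj (op (ModuleCat.of A M))).obj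
    (ModuleCat.of A N)) : Type)

/-- The canonical evaluation (biduality) map `M → Hom_{Aᵒᵖ}(Hom_A(M, A), A)`. -/
def evalBidual (A : Type) [Ring A] (M : Type) [AddCommGroup M] [Module A M] :
    M →ₗ[A] ((M →ₗ[A] A) →ₗ[Aᵐᵒᵖ] A) where
  toFun m :=
    { toFun := fun f => f m
      map_add' := fun f g => rfl
      map_smul' := fun c f => rfl }
  map_add' m n := by ext f; simp
  map_smul' a m := by ext f; simp

/-- A module `M` over a ring `A` is totally reflexive (finitely generated Gorenstein
projective) if `Ext^i_A(M, A) = 0` and `Ext^i_{Aᵒᵖ}(Hom_A(M, A), A) = 0` for all `i > 0`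
and the evaluation map `M → Hom_{Aᵒᵖ}(Hom_A(M, A), A)` is bijective. -/
noncomputable def IsTotallyReflexive (A : Type) [Ring A] (M : Type) [AddCommGroup M]
    [Module A M] : Prop :=
  (∀ i > 0, extVan A M A i) ∧
  (∀ i > 0, extVan Aᵐᵒᵖ (M →ₗ[A] A) A i) ∧
  Function.Bijective (evalBidual A M)


section Tools
variable {R : Type} [Ring R]

structure ConcRes (R : Type) [Ring R] (M : Type) [AddCommGroup M] [Module R M] where
  X : ℕ → Type
  acg : ∀ i, AddCommGroup (X i)
  mod : ∀ i, Module R (X i)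
  proj : ∀ i, Module.Projective R (X i)
  d : ∀ i, X (i + 1) →ₗ[R] X i
  ε : X 0 →ₗ[R] M
  surj : Function.Surjective ε
  ex0 : ∀ x, ε x = 0 ↔ x ∈ LinearMap.range (d 0)
  ex : ∀ i x, d i x = 0 ↔ x ∈ LinearMap.range (d (i + 1))

attribute [instance] ConcRes.acg ConcRes.mod

namespace ConcRes
variable {M : Type} [AddCommGroup M] [Module R M] (C : ConcRes R M)

noncomputable def cx : ChainComplex (ModuleCat R) ℕ :=
  ChainComplex.of (fun i => ModuleCat.of R (C.X i)) (fun i => ModuleCat.ofHom (C.d i))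
    (fun i => by
      ext x
      exact ((C.ex i (C.d (i+1) x)).2 ⟨x, rfl⟩))

lemma cx_d (i : ℕ) : C.cx.d (i+1) i = ModuleCat.ofHom (C.d i) :=
  ChainComplex.of_d (fun i => ModuleCat.of R (C.X i)) (fun i => ModuleCat.ofHom (C.d i)) i

noncomputable def toPR : ProjectiveResolution (ModuleCat.of R M) where
  complex := C.cx
  projective i := (IsProjective.iff_projective (C.X i)).mp (C.proj i)
  π := (ChainComplex.toSingle₀Equiv _ _).symm
    ⟨ModuleCat.ofHom C.ε, by rw [C.cx_d 0]; ext x; exact (C.ex0 (C.d 0 x)).2 ⟨x, rfl⟩⟩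
  quasiIso := ⟨fun n => by
    cases n with
    | zero =>
      rw [ChainComplex.quasiIsoAt₀_iff, ShortComplex.quasiIso_iff_of_zeros']
      · let S₂ : ShortComplex (ModuleCat R) := ShortComplex.mk
            (X₁ := ModuleCat.of R (C.X 1)) (X₂ := ModuleCat.of R (C.X 0))
            (X₃ := ModuleCat.of R M) (ModuleCat.ofHom (C.d 0)) (ModuleCat.ofHom C.ε)
            (by ext x; exact (C.ex0 (C.d 0 x)).2 ⟨x, rfl⟩)
        have hex : S₂.Exact := by
          rw [ShortComplex.moduleCat_exact_iff]
          intro x hx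
          exact (C.ex0 x).1 hx
        have hepi : Epi S₂.g := by
          rw [ModuleCat.epi_iff_surjective]; exact C.surj
        exact (ShortComplex.exact_and_epi_g_iff_of_iso
          (ShortComplex.isoMk (Iso.refl _) (Iso.refl _) (Iso.refl _)
            (by simp [S₂, cx, ChainComplex.of_d, ChainComplex.toSingle₀Equiv]; rfl) (by simp [S₂, ChainComplex.toSingle₀Equiv]; rfl)).symm).2
          ⟨hex, hepi⟩
      all_goals rfl
    | succ n =>
      rw [quasiIsoAt_iff_exactAt']
      · rw [C.cx.exactAt_iff' (n+2) (n+1) n (by simp) (by simp)]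
        rw [ShortComplex.exact_iff_of_iso (ShortComplex.isoMk (Iso.refl _) (Iso.refl _) (Iso.refl _)
          (by simp; exact (C.cx_d (n+1)).symm) (by simp; exact (C.cx_d n).symm) :
            C.cx.sc' (n+2) (n+1) n ≅ ShortComplex.mk
              (ModuleCat.ofHom (C.d (n+1)) : ModuleCat.of R (C.X (n+2)) ⟶ ModuleCat.of R (C.X (n+1)))
              (ModuleCat.ofHom (C.d n) : ModuleCat.of R (C.X (n+1)) ⟶ ModuleCat.of R (C.X n))
              (by ext x; exact (C.ex n (C.d (n+1) x)).2 ⟨x, rfl⟩))]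
        rw [ShortComplex.moduleCat_exact_iff]
        intro x hx
        exact (C.ex n x).1 hx
      · apply ChainComplex.exactAt_succ_single_obj⟩

end ConcRes
end Tools


section Tools2
variable {R : Type} [Ring R]

lemma subsingleton_of_isZero {X : ModuleCat ℤ} (h : Limits.IsZero X) : Subsingleton X := by
  have hz : ∀ x : X, x = 0 := by
    intro x
    have h0 : (𝟙 X : X ⟶ X) = 0 := h.eq_of_src _ _
    calc x = (𝟙 X : X ⟶ X) x := rfl
    _ = (0 : X ⟶ X) x := by rw [h0]
    _ = 0 := rfl
  exact ⟨fun a b => by rw [hz a, hz b]⟩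

lemma isZero_of_subsingleton' {X : ModuleCat ℤ} (h : Subsingleton X) : Limits.IsZero X :=
  ModuleCat.isZero_of_subsingleton X

namespace ConcRes
variable {M N : Type} [AddCommGroup M] [Module R M] [AddCommGroup N] [Module R N]

lemma extVan_iff (C : ConcRes R M) (i : ℕ) :
    extVan R M N (i + 1) ↔
      ∀ α : C.X (i + 1) →ₗ[R] N, α ∘ₗ C.d (i + 1) = 0 →
        ∃ g : C.X i →ₗ[R] N, α = g ∘ₗ C.d i := by
  have e := C.toPR.isoExt (R := ℤ) (i + 1) (ModuleCat.of R N)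
  set L := (C.toPR.complex.linearYonedaObj ℤ (ModuleCat.of R N)) with hL
  have eq1 : ∀ x, e.inv (e.hom x) = x := fun x => by
    have h := ConcreteCategory.congr_hom e.hom_inv_id x
    exact h
  have eq2 : ∀ x, e.hom (e.inv x) = x := fun x => by
    have h := ConcreteCategory.congr_hom e.inv_hom_id x
    exact h
  have eqv : _ ≃ _ := Equiv.mk e.hom e.inv eq1 eq2
  have hsub : extVan R M N (i + 1) ↔ Subsingleton (L.homology (i + 1)) :=
    eqv.subsingleton_congr
  rw [hsub]
  have hExact : Subsingleton (L.homology (i + 1)) ↔ L.ExactAt (i + 1) := by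
    rw [HomologicalComplex.exactAt_iff_isZero_homology]
    exact ⟨fun h => isZero_of_subsingleton' h, fun h => subsingleton_of_isZero h⟩
  rw [hExact, L.exactAt_iff' i (i+1) (i+2) (by simp) (by simp),
    ShortComplex.moduleCat_exact_iff]
  have hD1 : L.d (i+1) (i+2)
      = ModuleCat.ofHom (Linear.leftComp ℤ (ModuleCat.of R N) (ModuleCat.ofHom (C.d (i+1)))) :=
    (ChainComplex.linearYonedaObj_d C.toPR.complex ℤ (ModuleCat.of R N) (i+1) (i+2)).trans
      (congrArg (fun f => ModuleCat.ofHom (Linear.leftComp ℤ (ModuleCat.of R N) f))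
        (C.cx_d (i+1) : C.toPR.complex.d (i+2) (i+1) = _))
  have hD0 : L.d i (i+1)
      = ModuleCat.ofHom (Linear.leftComp ℤ (ModuleCat.of R N) (ModuleCat.ofHom (C.d i))) :=
    (ChainComplex.linearYonedaObj_d C.toPR.complex ℤ (ModuleCat.of R N) i (i+1)).trans
      (congrArg (fun f => ModuleCat.ofHom (Linear.leftComp ℤ (ModuleCat.of R N) f))
        (C.cx_d i : C.toPR.complex.d (i+1) i = _))
  have hscf : (L.sc' i (i+1) (i+2)).f = L.d i (i+1) := rfl
  have hscg : (L.sc' i (i+1) (i+2)).g = L.d (i+1) (i+2) := rfl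
  constructor
  · intro h α hα
    obtain ⟨g, hg⟩ := h (ModuleCat.ofHom α) (by rw [hscg, hD1]; exact ModuleCat.hom_ext hα)
    refine ⟨g.hom, ?_⟩
    rw [hscf, hD0] at hg
    exact congrArg ModuleCat.Hom.hom hg.symm
  · intro h α hα
    rw [hscg, hD1] at hα
    obtain ⟨g, hg⟩ := h (α : C.toPR.complex.X (i+1) ⟶ ModuleCat.of R N).hom
      (by exact congrArg ModuleCat.Hom.hom hα)
    refine ⟨ModuleCat.ofHom g, ?_⟩
    rw [hscf, hD0]
    exact ModuleCat.hom_ext hg.symm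

end ConcRes
end Tools2

section Extract
variable {R : Type} [Ring R] (M : Type) [AddCommGroup M] [Module R M]

noncomputable def concResOf : ConcRes R M := by
  let P := ProjectiveResolution.of (ModuleCat.of R M)
  let ι : ((ChainComplex.single₀ (ModuleCat R)).obj (ModuleCat.of R M)).X 0 ≅
      ModuleCat.of R M := HomologicalComplex.singleObjXSelf (ComplexShape.down ℕ) 0 _
  refine
  { X := fun i => (P.complex.X i : Type)
    acg := fun i => inferInstance
    mod := fun i => inferInstance
    proj := fun i => (IsProjective.iff_projective _).mpr (P.projective i)
    d := fun i => (P.complex.d (i + 1) i).hom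
    ε := (P.π.f 0 ≫ ι.hom).hom
    surj := ?_
    ex0 := ?_
    ex := ?_ }
  · have : Epi (P.π.f 0 ≫ ι.hom) := epi_comp _ _
    exact (ModuleCat.epi_iff_surjective _).1 this
  · intro x
    constructor
    · intro hx
      have h0 : (P.π.f 0) x = 0 := by
        have h2 := congrArg ι.inv hx
        have h3 : (P.π.f 0) x = ι.inv 0 := (ConcreteCategory.congr_hom ι.hom_inv_id ((P.π.f 0) x)).symm.trans h2
        rw [h3]; exact map_zero _
      obtain ⟨y, hy⟩ := (ShortComplex.moduleCat_exact_iff _).1 P.exact₀ x h0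
      exact ⟨y, hy⟩
    · rintro ⟨y, rfl⟩
      have h := ConcreteCategory.congr_hom P.complex_d_comp_π_f_zero y
      show ι.hom ((P.π.f 0) ((P.complex.d 1 0) y)) = 0
      have h' : (P.π.f 0) ((P.complex.d 1 0) y) = 0 := h
      rw [h']
      exact map_zero _
  · intro i x
    constructor
    · intro hx
      obtain ⟨y, hy⟩ := (ShortComplex.moduleCat_exact_iff _).1 (P.exact_succ i) x hx
      exact ⟨y, hy⟩
    · rintro ⟨y, rfl⟩
      exact ConcreteCategory.congr_hom (P.complex.d_comp_d (i+2) (i+1) i) y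

end Extract

section Splice
variable {R M F0 : Type} [Ring R] [AddCommGroup M] [Module R M] [AddCommGroup F0] [Module R F0]

/-- Splice a projective cover with a resolution of its kernel. -/
noncomputable def ConcRes.splice (hF0 : Module.Projective R F0) (e : F0 →ₗ[R] M)
    (he : Function.Surjective e) (C : ConcRes R (LinearMap.ker e)) : ConcRes R M where
  X := fun i => match i with | 0 => F0 | (i+1) => C.X i
  acg := fun i => match i with | 0 => inferInstance | (i+1) => inferInstance
  mod := fun i => match i with | 0 => inferInstance | (i+1) => inferInstance
  proj := fun i => match i with | 0 => hF0 | (i+1) => C.proj i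
  d := fun i => match i with
    | 0 => (LinearMap.ker e).subtype ∘ₗ C.ε
    | (i+1) => C.d i
  ε := e
  surj := he
  ex0 := by
    intro x
    constructor
    · intro hx
      obtain ⟨y, hy⟩ := C.surj ⟨x, hx⟩
      exact ⟨y, by simp [hy]⟩
    · rintro ⟨y, rfl⟩
      exact (C.ε y).2
  ex := fun i => match i with
    | 0 => by
      intro x
      constructor
      · intro hx
        have hx' : C.ε x = 0 := by
          apply Subtype.ext
          simpa using congrArg (fun z => z) hx
        exact (C.ex0 x).1 hx'
      · rintro ⟨y, rfl⟩
        have : C.ε (C.d 0 y) = 0 := (C.ex0 _).2 ⟨y, rfl⟩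
        show (LinearMap.ker e).subtype (C.ε (C.d 0 y)) = 0
        rw [this]; rfl
    | (i+1) => C.ex i

end Splice

section Lifts
variable {R : Type} [Ring R]

lemma factor_through_inj {X Y W : Type} [AddCommGroup X] [Module R X] [AddCommGroup Y]
    [Module R Y] [AddCommGroup W] [Module R W] (ι : X →ₗ[R] Y) (hι : Function.Injective ι)
    (c : W →ₗ[R] Y) (hc : ∀ w, c w ∈ LinearMap.range ι) :
    ∃ u : W →ₗ[R] X, ∀ w, ι (u w) = c w := by
  let e := LinearEquiv.ofInjective ι hι
  refine ⟨(e.symm : LinearMap.range ι →ₗ[R] X) ∘ₗ c.codRestrict (LinearMap.range ι) hc, ?_⟩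
  intro w
  have : ∀ z : LinearMap.range ι, ι (e.symm z) = z := by
    intro z
    have := e.apply_symm_apply z
    calc ι (e.symm z) = (e (e.symm z) : Y) := rfl
    _ = z := by rw [this]
  exact this _

lemma lift_into_range {V P W : Type} [AddCommGroup V] [Module R V] [AddCommGroup P]
    [Module R P] [AddCommGroup W] [Module R W] [Module.Projective R W]
    (g : V →ₗ[R] P) (c : W →ₗ[R] P) (hc : ∀ w, c w ∈ LinearMap.range g) :
    ∃ u : W →ₗ[R] V, ∀ w, g (u w) = c w := by
  obtain ⟨h, hh⟩ := Module.projective_lifting_property g.rangeRestrict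
    (c.codRestrict (LinearMap.range g) hc) (LinearMap.surjective_rangeRestrict g)
  refine ⟨h, fun w => ?_⟩
  have := congrArg (fun (f : W →ₗ[R] LinearMap.range g) => ((f w : LinearMap.range g) : P)) hh
  simpa using this

end Lifts

section Horseshoe
variable {R X Y Z : Type} [Ring R] [AddCommGroup X] [Module R X] [AddCommGroup Y] [Module R Y]
  [AddCommGroup Z] [Module R Z]
  (ι : X →ₗ[R] Y) (π : Y →ₗ[R] Z)
  (P : ConcRes R X) (F : ConcRes R Z)

/-- Horseshoe data: compatible lifts along a short exact sequence. -/
structure HorseshoeData where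
  σ : F.X 0 →ₗ[R] Y
  hσ : ∀ f, π (σ f) = F.ε f
  θ : ∀ i, F.X (i + 1) →ₗ[R] P.X i
  hθ0 : ∀ f, ι (P.ε (θ 0 f)) = - σ (F.d 0 f)
  hθ : ∀ i f, P.d i (θ (i + 1) f) = - θ i (F.d (i + 1) f)

lemma horseshoeData_nonempty (hι : Function.Injective ι) (hπ : Function.Surjective π)
    (hex : ∀ y, π y = 0 ↔ y ∈ LinearMap.range ι) :
    Nonempty (HorseshoeData ι π P F) := by
  classical
  haveI := P.proj
  haveI := F.proj
  obtain ⟨σ, hσ⟩ := Module.projective_lifting_property (h := F.proj 0) π F.ε hπ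
  have hσ' : ∀ f, π (σ f) = F.ε f := fun f =>
    congrArg (fun (g : F.X 0 →ₗ[R] Z) => g f) hσ
  -- base map t0 with invariant
  have hw : ∀ w : F.X 1, (-(σ ∘ₗ F.d 0)) w ∈ LinearMap.range ι := by
    intro w
    rw [← hex]
    have h1 : F.ε (F.d 0 w) = 0 := (F.ex0 _).2 ⟨w, rfl⟩
    show π (-(σ (F.d 0 w))) = 0
    rw [map_neg, hσ' (F.d 0 w), h1, neg_zero]
  obtain ⟨w0, hw0⟩ := factor_through_inj ι hι (-(σ ∘ₗ F.d 0)) hw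
  obtain ⟨t0, ht0⟩ := lift_into_range (W := F.X 1) P.ε w0
    (fun w => by obtain ⟨v, hv⟩ := P.surj (w0 w); exact ⟨v, hv⟩)
  have ht0' : ∀ f, ι (P.ε (t0 f)) = - σ (F.d 0 f) := by
    intro f
    rw [ht0 f, hw0 f]
    rfl
  have inv0 : ∀ f : F.X 2, t0 (F.d 1 f) ∈ LinearMap.range (P.d 0) := by
    intro f
    rw [← P.ex0]
    apply hι
    rw [ht0' (F.d 1 f), map_zero]
    have : F.d 0 (F.d 1 f) = 0 := (F.ex 0 _).2 ⟨f, rfl⟩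
    rw [this, map_zero, neg_zero]
  -- step construction
  have step : ∀ (i : ℕ) (t : F.X (i+1) →ₗ[R] P.X i)
      (hinv : ∀ f, t (F.d (i+1) f) ∈ LinearMap.range (P.d i)),
      ∃ t' : F.X (i+2) →ₗ[R] P.X (i+1),
        (∀ f, P.d i (t' f) = - t (F.d (i+1) f)) ∧
        (∀ f, t' (F.d (i+2) f) ∈ LinearMap.range (P.d (i+1))) := by
    intro i t hinv
    obtain ⟨t', ht'⟩ := lift_into_range (P.d i) (-(t ∘ₗ F.d (i+1)))
      (fun f => by
        have := hinv f
        show -(t (F.d (i+1) f)) ∈ _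
        exact neg_mem this)
    refine ⟨t', fun f => ht' f, fun f => ?_⟩
    rw [← P.ex]
    rw [ht' (F.d (i+2) f)]
    show -(t (F.d (i+1) (F.d (i+2) f))) = 0
    have : F.d (i+1) (F.d (i+2) f) = 0 := (F.ex (i+1) _).2 ⟨f, rfl⟩
    rw [this, map_zero, neg_zero]
  -- build the chain by recursion
  let chain : ∀ i : ℕ, { t : F.X (i+1) →ₗ[R] P.X i //
      ∀ f, t (F.d (i+1) f) ∈ LinearMap.range (P.d i) } :=
    fun i => Nat.rec ⟨t0, inv0⟩
      (fun i prev => ⟨Classical.choose (step i prev.1 prev.2),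
        (Classical.choose_spec (step i prev.1 prev.2)).2⟩) i
  refine ⟨⟨σ, hσ', fun i => (chain i).1, ht0', fun i f => ?_⟩⟩
  exact (Classical.choose_spec (step i (chain i).1 (chain i).2)).1 f

/-- The horseshoe resolution of the middle term of a short exact sequence. -/
noncomputable def horseshoe (H : HorseshoeData ι π P F) (hι : Function.Injective ι)
    (hπ : Function.Surjective π)
    (hex : ∀ y, π y = 0 ↔ y ∈ LinearMap.range ι) : ConcRes R Y := by
  classical
  exact
  { X := fun i => P.X i × F.X i
    acg := fun i => inferInstance
    mod := fun i => inferInstance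
    proj := fun i => by
      haveI := P.proj i
      haveI := F.proj i
      infer_instance
    d := fun i => LinearMap.prod
      ((P.d i) ∘ₗ (LinearMap.fst R _ _) + (H.θ i) ∘ₗ (LinearMap.snd R _ _))
      ((F.d i) ∘ₗ (LinearMap.snd R _ _))
    ε := ι ∘ₗ P.ε ∘ₗ (LinearMap.fst R _ _) + H.σ ∘ₗ (LinearMap.snd R _ _)
    surj := by
      rintro y
      obtain ⟨f, hf⟩ := F.surj (π y)
      have hy : π (y - H.σ f) = 0 := by rw [map_sub, H.hσ f, hf, sub_self]
      obtain ⟨x, hx⟩ := (hex _).1 hy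
      obtain ⟨p, hp⟩ := P.surj x
      refine ⟨(p, f), ?_⟩
      show ι (P.ε p) + H.σ f = y
      rw [hp, hx]
      abel
    ex0 := by
      intro x
      constructor
      · intro hpf
        obtain ⟨p, f⟩ := x
        have hpf' : ι (P.ε p) + H.σ f = 0 := hpf
        -- π of it: F.ε f = 0
        have hf : F.ε f = 0 := by
          have := congrArg π hpf'
          rw [map_add, map_zero] at this
          rw [← H.hσ f]
          have hx : π (ι (P.ε p)) = 0 := (hex _).2 ⟨P.ε p, rfl⟩
          rw [hx, zero_add] at this
          exact this
        obtain ⟨f', hf'⟩ := (F.ex0 f).1 hf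
        -- p - θ 0 f' is a cycle
        have hc : P.ε (p - H.θ 0 f') = 0 := by
          apply hι
          rw [map_zero, map_sub, map_sub, H.hθ0 f', hf']
          rw [sub_neg_eq_add]
          exact hpf'
        obtain ⟨p', hp'⟩ := (P.ex0 _).1 hc
        refine ⟨(p', f'), ?_⟩
        apply Prod.ext
        · show P.d 0 p' + H.θ 0 f' = p
          rw [hp']
          abel
        · show F.d 0 f' = f
          exact hf'
      · rintro ⟨⟨p', f'⟩, rfl⟩
        show ι (P.ε (P.d 0 p' + H.θ 0 f')) + H.σ (F.d 0 f') = 0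
        rw [map_add, map_add, (P.ex0 (P.d 0 p')).2 ⟨p', rfl⟩, map_zero, zero_add,
          H.hθ0 f']
        abel
    ex := by
      intro i x
      constructor
      · intro hpf
        obtain ⟨p, f⟩ := x
        have h1 : P.d i p + H.θ i f = 0 := congrArg Prod.fst hpf
        have h2 : F.d i f = 0 := congrArg Prod.snd hpf
        obtain ⟨f', hf'⟩ := (F.ex i f).1 h2
        have hc : P.d i (p - H.θ (i+1) f') = 0 := by
          rw [map_sub, H.hθ i f', hf', sub_neg_eq_add]
          exact h1
        obtain ⟨p', hp'⟩ := (P.ex i _).1 hc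
        refine ⟨(p', f'), ?_⟩
        apply Prod.ext
        · show P.d (i+1) p' + H.θ (i+1) f' = p
          rw [hp']
          abel
        · exact hf'
      · rintro ⟨⟨p', f'⟩, rfl⟩
        apply Prod.ext
        · show P.d i (P.d (i+1) p' + H.θ (i+1) f') + H.θ i (F.d (i+1) f') = 0
          rw [map_add, (P.ex i (P.d (i+1) p')).2 ⟨p', rfl⟩, zero_add, H.hθ i f']
          abel
        · show F.d i (F.d (i+1) f') = 0
          exact (F.ex i _).2 ⟨f', rfl⟩ }

lemma horseshoe_X (H : HorseshoeData ι π P F) (hι : Function.Injective ι)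
    (hπ : Function.Surjective π)
    (hex : ∀ y, π y = 0 ↔ y ∈ LinearMap.range ι) (i : ℕ) :
    (horseshoe ι π P F H hι hπ hex).X i = (P.X i × F.X i) := rfl

end Horseshoe

section Descend
variable {R G M N : Type} [Ring R] [AddCommGroup G] [Module R G] [AddCommGroup M] [Module R M]
  [AddCommGroup N] [Module R N]

lemma descend_through_surj (π : G →ₗ[R] M) (hπ : Function.Surjective π) (g : G →ₗ[R] N)
    (hg : ∀ x, π x = 0 → g x = 0) : ∃ h : M →ₗ[R] N, ∀ x, h (π x) = g x := by
  have hker : LinearMap.ker π ≤ LinearMap.ker g := fun x hx => hg x hx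
  let e := π.quotKerEquivOfSurjective hπ
  refine ⟨(LinearMap.ker π).liftQ g hker ∘ₗ (e.symm : M →ₗ[R] G ⧸ LinearMap.ker π), fun x => ?_⟩
  have he : e.symm (π x) = Submodule.Quotient.mk x := by
    apply e.injective
    rw [e.apply_symm_apply]
    rfl
  show (LinearMap.ker π).liftQ g hker (e.symm (π x)) = g x
  rw [he]
  rfl

end Descend

section ExtLemmas
variable {R K G M N : Type} [Ring R] [AddCommGroup K] [Module R K] [AddCommGroup G] [Module R G]
  [AddCommGroup M] [Module R M] [AddCommGroup N] [Module R N]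

/-- The extension lemma: if `Ext¹(M، N) = 0` and `0 → K → G → M → 0` is exact, every map
`K → N` extends to `G`. -/
lemma extension_lemma (ι : K →ₗ[R] G) (π : G →ₗ[R] M) (hι : Function.Injective ι)
    (hπ : Function.Surjective π) (hexx : ∀ y, π y = 0 ↔ y ∈ LinearMap.range ι)
    (hM1 : extVan R M N 1) (φ : K →ₗ[R] N) :
    ∃ Φ : G →ₗ[R] N, ∀ k, Φ (ι k) = φ k := by
  classical
  -- a free cover of G, giving a resolution of M starting with it
  let σ : (G →₀ R) →ₗ[R] G := Finsupp.linearCombination R id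
  have hσ : Function.Surjective σ := by
    intro x
    exact ⟨Finsupp.single x 1, by simp [σ]⟩
  have hεF : Function.Surjective (π ∘ₗ σ) := hπ.comp hσ
  let E : ConcRes R M := ConcRes.splice inferInstance (π ∘ₗ σ) hεF
    (concResOf (LinearMap.ker (π ∘ₗ σ)))
  have hEε : ∀ x, E.ε x = π (σ x) := fun _ => rfl
  -- the comparison map w : E.X 1 → K
  have hwmem : ∀ y : E.X 1, σ (E.d 0 y) ∈ LinearMap.range ι := by
    intro y
    rw [← hexx]
    have : E.ε (E.d 0 y) = 0 := (E.ex0 _).2 ⟨y, rfl⟩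
    exact this
  obtain ⟨w, hw⟩ := factor_through_inj ι hι (σ ∘ₗ E.d 0) hwmem
  -- φ ∘ w is a cocycle
  have hco : (φ ∘ₗ w) ∘ₗ E.d 1 = 0 := by
    ext y
    have h1 : ι (w (E.d 1 y)) = σ (E.d 0 (E.d 1 y)) := hw _
    have h2 : E.d 0 (E.d 1 y) = 0 := (E.ex 0 _).2 ⟨y, rfl⟩
    rw [show σ (E.d 0 (E.d 1 y)) = σ 0 from congrArg σ h2, map_zero] at h1
    have h3 : w (E.d 1 y) = 0 := by
      apply hι
      rw [h1, map_zero]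
    show φ (w (E.d 1 y)) = 0
    rw [h3, map_zero]
  obtain ⟨ψ, hψ⟩ := (E.extVan_iff 0).1 hM1 (φ ∘ₗ w) hco
  have hψ' : ∀ y, φ (w y) = ψ (E.d 0 y) :=
    fun y => congrArg (fun (t : E.X 1 →ₗ[R] N) => t y) hψ
  -- ψ kills ker σ
  have hkill : ∀ x, σ x = 0 → ψ x = 0 := by
    intro x hx
    have hE : E.ε x = 0 := (hEε x).trans (by rw [hx, map_zero])
    obtain ⟨y, hy⟩ := (E.ex0 x).1 hE
    have h1 : ι (w y) = σ (E.d 0 y) := hw y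
    rw [hy, hx] at h1
    have h2 : w y = 0 := by apply hι; rw [h1, map_zero]
    rw [← hy, ← hψ' y, h2, map_zero]
  obtain ⟨Φ, hΦ⟩ := descend_through_surj σ hσ ψ hkill
  refine ⟨Φ, fun k => ?_⟩
  obtain ⟨x, hx⟩ := hσ (ι k)
  have hE : E.ε x = 0 := (hEε x).trans <| by
    rw [hx]
    exact (hexx _).2 ⟨k, rfl⟩
  obtain ⟨y, hy⟩ := (E.ex0 x).1 hE
  have h1 : ι (w y) = σ (E.d 0 y) := hw y
  rw [hy, hx] at h1
  have h2 : w y = k := hι h1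
  rw [← hx, hΦ x, ← hy]
  exact (hψ' y).symm.trans (congrArg φ h2)

/-- Vanishing of Ext for the sub in a short exact sequence whose middle and quotient
have vanishing Ext. -/
lemma ext_vanish_sub (ι : K →ₗ[R] G) (π : G →ₗ[R] M) (hι : Function.Injective ι)
    (hπ : Function.Surjective π) (hexx : ∀ y, π y = 0 ↔ y ∈ LinearMap.range ι)
    (hG : ∀ i > 0, extVan R G N i) (hM : ∀ i > 0, extVan R M N i) :
    ∀ i > 0, extVan R K N i := by
  classical
  rintro i hi
  obtain ⟨i, rfl⟩ : ∃ j, i = j + 1 := ⟨i - 1, by omega⟩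
  let P : ConcRes R K := concResOf K
  let F : ConcRes R M := concResOf M
  have H : HorseshoeData ι π P F := (horseshoeData_nonempty ι π P F hι hπ hexx).some
  let Q : ConcRes R G := horseshoe ι π P F H hι hπ hexx
  have hQd : ∀ (j : ℕ) (p : P.X (j+1)) (f : F.X (j+1)),
      Q.d j (p, f) = (P.d j p + H.θ j f, F.d j f) := fun j p f => rfl
  rw [P.extVan_iff i]
  intro α hα
  have hα' : ∀ p, α (P.d (i+1) p) = 0 :=
    fun p => congrArg (fun (t : P.X (i+2) →ₗ[R] N) => t p) hα
  -- γ is a cocycle on F in degree i+2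
  set γ : F.X (i+2) →ₗ[R] N := α ∘ₗ H.θ (i+1) with hγ
  have hγco : γ ∘ₗ F.d (i+2) = 0 := by
    ext x
    show α (H.θ (i+1) (F.d (i+2) x)) = 0
    have h1 : H.θ (i+1) (F.d (i+2) x) = - P.d (i+1) (H.θ (i+2) x) := by
      rw [H.hθ (i+1) x]; rw [neg_neg]
    rw [h1, map_neg, hα' _, neg_zero]
  obtain ⟨δ, hδ⟩ := (F.extVan_iff (i+1)).1 (hM (i+2) (by omega)) γ hγco
  have hδ' : ∀ f, α (H.θ (i+1) f) = δ (F.d (i+1) f) :=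
    fun f => congrArg (fun (t : F.X (i+2) →ₗ[R] N) => t f) hδ
  -- β' is a cocycle on Q in degree i+1
  set β' : (P.X (i+1) × F.X (i+1)) →ₗ[R] N :=
    α ∘ₗ (LinearMap.fst R _ _) - δ ∘ₗ (LinearMap.snd R _ _) with hβ'
  have hβco : (show Q.X (i+1) →ₗ[R] N from β') ∘ₗ Q.d (i+1) = 0 := by
    ext x
    obtain ⟨p, f⟩ := x
    show β' (Q.d (i+1) (p, f)) = 0
    rw [hQd (i+1) p f]
    show α (P.d (i+1) p + H.θ (i+1) f) - δ (F.d (i+1) f) = 0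
    rw [map_add, hα' p, zero_add, hδ' f, sub_self]
  obtain ⟨η, hη⟩ := (Q.extVan_iff i).1 (hG (i+1) (by omega))
    (show Q.X (i+1) →ₗ[R] N from β') hβco
  have hη' : ∀ x : P.X (i+1) × F.X (i+1), β' x = η (Q.d i x) :=
    fun x => congrArg (fun (t : Q.X (i+1) →ₗ[R] N) => t x) hη
  refine ⟨η ∘ₗ LinearMap.inl R (P.X i) (F.X i), ?_⟩
  ext p
  have h2 := hη' (p, 0)
  have h3 : β' (p, (0 : F.X (i+1))) = α p := by
    show α p - δ 0 = α p
    rw [map_zero, sub_zero]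
  rw [h3] at h2
  have h4 : Q.d i (p, (0 : F.X (i+1))) = (P.d i p, (0 : F.X i)) := by
    rw [hQd i p 0]
    rw [map_zero, map_zero, add_zero]
  rw [h4] at h2
  exact h2

end ExtLemmas

section Duality
variable {R : Type} [Ring R]

/-- Precomposition (dual) map on `R`-duals, as an `Rᵐᵒᵖ`-linear map. -/
def dualMap' {M M' : Type} [AddCommGroup M] [Module R M] [AddCommGroup M'] [Module R M']
    (f : M →ₗ[R] M') : (M' →ₗ[R] R) →ₗ[Rᵐᵒᵖ] (M →ₗ[R] R) where
  toFun g := g ∘ₗ f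
  map_add' g h := by ext x; rfl
  map_smul' c g := by ext x; rfl

@[simp] lemma dualMap'_apply {M M' : Type} [AddCommGroup M] [Module R M] [AddCommGroup M']
    [Module R M'] (f : M →ₗ[R] M') (g : M' →ₗ[R] R) (x : M) :
    dualMap' f g x = g (f x) := rfl

/-- The dual equivalence on `R`-duals induced by a linear equivalence. -/
def dualEquiv' {M M' : Type} [AddCommGroup M] [Module R M] [AddCommGroup M'] [Module R M']
    (e : M ≃ₗ[R] M') : (M →ₗ[R] R) ≃ₗ[Rᵐᵒᵖ] (M' →ₗ[R] R) where
  toFun g := g ∘ₗ (e.symm : M' →ₗ[R] M)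
  invFun g := g ∘ₗ (e : M →ₗ[R] M')
  map_add' g h := by ext x; rfl
  map_smul' c g := by ext x; rfl
  left_inv g := by ext x; show g (e.symm (e x)) = g x; rw [e.symm_apply_apply]
  right_inv g := by ext x; show g (e (e.symm x)) = g x; rw [e.apply_symm_apply]

lemma subsingleton_congr_of_iso {X Y : ModuleCat ℤ} (e : X ≅ Y) :
    Subsingleton X ↔ Subsingleton Y := by
  have eq1 : ∀ x, e.inv (e.hom x) = x := fun x => ConcreteCategory.congr_hom e.hom_inv_id x
  have eq2 : ∀ x, e.hom (e.inv x) = x := fun x => ConcreteCategory.congr_hom e.inv_hom_id x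
  exact (Equiv.mk e.hom e.inv eq1 eq2).subsingleton_congr

lemma extVan_congr {M M' N : Type} [AddCommGroup M] [Module R M] [AddCommGroup M']
    [Module R M'] [AddCommGroup N] [Module R N] (e : M ≃ₗ[R] M') (i : ℕ) :
    extVan R M N i ↔ extVan R M' N i := by
  have j := ((Ext ℤ (ModuleCat.{0} R) i).mapIso (Iso.op e.toModuleIso)).app
    (ModuleCat.of R N)
  exact (subsingleton_congr_of_iso j).symm

lemma isTotallyReflexive_congr {M M' : Type} [AddCommGroup M] [Module R M] [AddCommGroup M']
    [Module R M'] (e : M ≃ₗ[R] M') (h : IsTotallyReflexive R M') :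
    IsTotallyReflexive R M := by
  obtain ⟨h1, h2, h3⟩ := h
  refine ⟨fun i hi => (extVan_congr e i).2 (h1 i hi),
    fun i hi => (extVan_congr (dualEquiv' e) i).2 (h2 i hi), ?_⟩
  let Ψ : ((M' →ₗ[R] R) →ₗ[Rᵐᵒᵖ] R) → ((M →ₗ[R] R) →ₗ[Rᵐᵒᵖ] R) :=
    fun ξ => ξ ∘ₗ ((dualEquiv' e : (M →ₗ[R] R) ≃ₗ[Rᵐᵒᵖ] (M' →ₗ[R] R)) :
      (M →ₗ[R] R) →ₗ[Rᵐᵒᵖ] (M' →ₗ[R] R))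
  have hΨ : Function.Bijective Ψ := by
    refine ⟨fun ξ ζ hξζ => ?_, fun ξ => ?_⟩
    · ext g
      have h5 := congrArg (fun (t : (M →ₗ[R] R) →ₗ[Rᵐᵒᵖ] R) =>
        t ((dualEquiv' e).symm g)) hξζ
      have h6 : (dualEquiv' e) ((dualEquiv' e).symm g) = g :=
        (dualEquiv' e).apply_symm_apply g
      show ξ g = ζ g
      calc ξ g = ξ ((dualEquiv' e) ((dualEquiv' e).symm g)) := by rw [h6]
      _ = ζ ((dualEquiv' e) ((dualEquiv' e).symm g)) := h5
      _ = ζ g := by rw [h6]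
    · refine ⟨ξ ∘ₗ (((dualEquiv' e).symm : (M' →ₗ[R] R) ≃ₗ[Rᵐᵒᵖ] (M →ₗ[R] R)) :
        (M' →ₗ[R] R) →ₗ[Rᵐᵒᵖ] (M →ₗ[R] R)), ?_⟩
      ext g
      show ξ ((dualEquiv' e).symm ((dualEquiv' e) g)) = ξ g
      rw [(dualEquiv' e).symm_apply_apply]
  have hcomm : ⇑(evalBidual R M) = Ψ ∘ (⇑(evalBidual R M') ∘ ⇑e) := by
    funext m
    ext f
    show f m = (dualEquiv' e f) (e m)
    show f m = f (e.symm (e m))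
    rw [e.symm_apply_apply]
  rw [hcomm]
  exact hΨ.comp (h3.comp e.bijective)

end Duality

section MainStep
variable {R K G M : Type} [Ring R] [AddCommGroup K] [Module R K] [AddCommGroup G] [Module R G]
  [AddCommGroup M] [Module R M]

lemma main_step (ι : K →ₗ[R] G) (π : G →ₗ[R] M) (hι : Function.Injective ι)
    (hπ : Function.Surjective π) (hexx : ∀ y, π y = 0 ↔ y ∈ LinearMap.range ι)
    (hK : IsTotallyReflexive R K) (hG : IsTotallyReflexive R G)
    (hM1 : ∀ i > 0, extVan R M R i) : IsTotallyReflexive R M := by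
  classical
  obtain ⟨hK1, hK2, hK3⟩ := hK
  obtain ⟨hG1, hG2, hG3⟩ := hG
  -- dual maps
  let πd : (M →ₗ[R] R) →ₗ[Rᵐᵒᵖ] (G →ₗ[R] R) := dualMap' π
  let ιd : (G →ₗ[R] R) →ₗ[Rᵐᵒᵖ] (K →ₗ[R] R) := dualMap' ι
  -- the dualized sequence is exact
  have hπd_inj : Function.Injective πd := by
    intro g h hgh
    ext m
    obtain ⟨x, rfl⟩ := hπ m
    exact congrArg (fun (t : G →ₗ[R] R) => t x) hgh
  have hιd_surj : Function.Surjective ιd := by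
    intro φ
    obtain ⟨Φ, hΦ⟩ := extension_lemma ι π hι hπ hexx (hM1 1 one_pos) φ
    exact ⟨Φ, by ext k; exact hΦ k⟩
  have hπι : ∀ k, π (ι k) = 0 := fun k => (hexx _).2 ⟨k, rfl⟩
  have hd_exact : ∀ g : G →ₗ[R] R, ιd g = 0 ↔ g ∈ LinearMap.range πd := by
    intro g
    constructor
    · intro hg
      have hg' : ∀ k, g (ι k) = 0 := fun k =>
        congrArg (fun (t : K →ₗ[R] R) => t k) hg
      have hker : ∀ x, π x = 0 → g x = 0 := by
        intro x hx
        obtain ⟨k, rfl⟩ := (hexx x).1 hx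
        exact hg' k
      obtain ⟨h, hh⟩ := descend_through_surj π hπ g hker
      exact ⟨h, by ext x; exact hh x⟩
    · rintro ⟨h, rfl⟩
      ext k
      show h (π (ι k)) = 0
      rw [hπι k, map_zero]
  -- Ext vanishing of the dual of M over the opposite ring
  have hM2 : ∀ i > 0, extVan Rᵐᵒᵖ (M →ₗ[R] R) R i :=
    ext_vanish_sub πd ιd hπd_inj hιd_surj hd_exact hG2 hK2
  refine ⟨hM1, hM2, ?_, ?_⟩
  -- injectivity of the evaluation map
  · intro m m' hmm'
    -- reduce to showing: eval m = 0 → m = 0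
    suffices hzero : ∀ m, evalBidual R M m = 0 → m = 0 by
      have : evalBidual R M (m - m') = 0 := by rw [map_sub, hmm', sub_self]
      have := hzero _ this
      exact sub_eq_zero.1 this
    intro m hm
    have hm' : ∀ h : M →ₗ[R] R, h m = 0 := fun h =>
      congrArg (fun (t : (M →ₗ[R] R) →ₗ[Rᵐᵒᵖ] R) => t h) hm
    obtain ⟨g, hg⟩ := hπ m
    -- ξ := eval_G g vanishes on the image of πd
    set ξ : (G →ₗ[R] R) →ₗ[Rᵐᵒᵖ] R := evalBidual R G g with hξ
    have hξπd : ∀ u, πd u = 0 → True := fun _ _ => trivial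
    have hkill : ∀ u : G →ₗ[R] R, ιd u = 0 → ξ u = 0 := by
      intro u hu
      obtain ⟨h, rfl⟩ := (hd_exact u).1 hu
      show (πd h) g = 0
      show h (π g) = 0
      rw [hg]
      exact hm' h
    obtain ⟨ζ, hζ⟩ := descend_through_surj (R := Rᵐᵒᵖ) ιd hιd_surj ξ hkill
    obtain ⟨k, hk⟩ := hK3.2 ζ
    have hιkg : evalBidual R G (ι k) = evalBidual R G g := by
      ext h
      show h (ι k) = ξ h
      rw [← hζ h, ← hk]
      rfl
    have hkg : ι k = g := hG3.1 hιkg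
    rw [← hg, ← hkg]
    exact hπι k
  -- surjectivity of the evaluation map
  · intro ξM
    obtain ⟨ξG, hξG⟩ := extension_lemma (R := Rᵐᵒᵖ) πd ιd hπd_inj hιd_surj hd_exact
      (hK2 1 one_pos) ξM
    obtain ⟨g, hgG⟩ := hG3.2 ξG
    refine ⟨π g, ?_⟩
    ext h
    show h (π g) = ξM h
    rw [← hξG h, ← hgG]
    rfl

end MainStep

section Induction
variable {R : Type} [Ring R]

lemma induction_lemma (n : ℕ) :
    ∀ (M : Type) (_ : AddCommGroup M) (_ : Module R M)
      (G : ℕ → Type) (_ : ∀ i, AddCommGroup (G i)) (_ : ∀ i, Module R (G i))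
      (_ : ∀ i, IsTotallyReflexive R (G i))
      (_ : ∀ i, n < i → Subsingleton (G i))
      (d : ∀ i, G (i + 1) →ₗ[R] G i) (ε : G 0 →ₗ[R] M)
      (_ : Function.Surjective ε)
      (_ : ∀ y, ε y = 0 ↔ y ∈ LinearMap.range (d 0))
      (_ : ∀ i y, d i y = 0 ↔ y ∈ LinearMap.range (d (i + 1)))
      (_ : ∀ i > 0, extVan R M R i),
      IsTotallyReflexive R M := by
  induction n with
  | zero =>
    intro M iM1 iM2 G iG1 iG2 hG hGzero d ε hε hex0 hexd hExt
    have hd0 : ∀ x, d 0 x = 0 := by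
      intro x
      haveI := hGzero 1 one_pos
      have : x = 0 := Subsingleton.elim x 0
      rw [this, map_zero]
    have hinj : Function.Injective ε := by
      intro x y hxy
      have : ε (x - y) = 0 := by rw [map_sub, hxy, sub_self]
      obtain ⟨z, hz⟩ := (hex0 _).1 this
      rw [hd0 z] at hz
      exact sub_eq_zero.1 hz.symm
    exact isTotallyReflexive_congr (LinearEquiv.ofBijective ε ⟨hinj, hε⟩).symm (hG 0)
  | succ n ih =>
    intro M iM1 iM2 G iG1 iG2 hG hGzero d ε hε hex0 hexd hExt
    -- the kernel K with its induced resolution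
    set Kmod := LinearMap.ker ε with hKmod
    have hd0K : ∀ x, d 0 x ∈ Kmod := fun x => (hex0 _).2 ⟨x, rfl⟩
    let ε' : G 1 →ₗ[R] Kmod := (d 0).codRestrict Kmod hd0K
    have hε'_surj : Function.Surjective ε' := by
      rintro ⟨y, hy⟩
      obtain ⟨x, hx⟩ := (hex0 y).1 hy
      exact ⟨x, Subtype.ext hx⟩
    have hex0' : ∀ y, ε' y = 0 ↔ y ∈ LinearMap.range (d 1) := by
      intro y
      constructor
      · intro hy
        have : d 0 y = 0 := congrArg Subtype.val hy
        exact (hexd 0 y).1 this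
      · intro hy
        exact Subtype.ext ((hexd 0 y).2 hy)
    -- Ext vanishing for K
    have hsub : ∀ y, ε y = 0 ↔ y ∈ LinearMap.range (Kmod.subtype) := by
      intro y
      rw [Submodule.range_subtype]
      exact Iff.rfl
    have hKExt : ∀ i > 0, extVan R Kmod R i :=
      ext_vanish_sub Kmod.subtype ε (Submodule.injective_subtype Kmod) hε hsub
        ((hG 0).1) hExt
    have hK : IsTotallyReflexive R Kmod :=
      ih Kmod inferInstance inferInstance (fun i => G (i + 1)) (fun i => inferInstance)
        (fun i => inferInstance) (fun i => hG (i + 1))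
        (fun i hi => hGzero (i + 1) (by omega))
        (fun i => d (i + 1)) ε' hε'_surj hex0' (fun i y => hexd (i + 1) y) hKExt
    exact main_step Kmod.subtype ε (Submodule.injective_subtype Kmod) hε hsub hK (hG 0) hExt

end Induction


/-- over a two-sided noetherian ring `A`, if a finitely generated module `M`
admits a finite resolution `0 → G_n → ⋯ → G_1 → G_0 → M → 0` by finitely generated
totally reflexive (Gorenstein projective) modules, and `Ext^i_A(M, A) = 0` for all `i > 0`,
then `M` is itself totally reflexive (Gorenstein projective). -/
theorem totallyReflexive_of_finite_gorenstein_resolution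
    (A : Type) [Ring A] [IsNoetherianRing A] [IsNoetherianRing Aᵐᵒᵖ]
    (M : Type) [AddCommGroup M] [Module A M] [Module.Finite A M]
    (n : ℕ) (G : ℕ → Type) [∀ i, AddCommGroup (G i)] [∀ i, Module A (G i)]
    [∀ i, Module.Finite A (G i)]
    (hG : ∀ i, IsTotallyReflexive A (G i))
    (hGzero : ∀ i, n < i → Subsingleton (G i))
    (d : ∀ i, G (i + 1) →ₗ[A] G i) (ε : G 0 →ₗ[A] M)
    (hε : Function.Surjective ε)
    (hex0 : Function.Exact (d 0) ε)
    (hex : ∀ i, Function.Exact (d (i + 1)) (d i))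
    (hExt : ∀ i > 0, extVan A M A i) :
    IsTotallyReflexive A M := by
  refine induction_lemma n M inferInstance inferInstance G inferInstance inferInstance
    hG hGzero d ε hε ?_ ?_ hExt
  · intro y
    rw [hex0 y]
    exact ⟨fun ⟨x, hx⟩ => ⟨x, hx⟩, fun ⟨x, hx⟩ => ⟨x, hx⟩⟩
  · intro i y
    rw [hex i y]
    exact ⟨fun ⟨x, hx⟩ => ⟨x, hx⟩, fun ⟨x, hx⟩ => ⟨x, hx⟩⟩
end
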